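/- With C' the biased Markov chain of an abstraction (C,F) →^α (C^•,F^•), for every state s ∈ S ∖ Av_C(F) and every absorbing T ⊆ F: the reachability probability of T from s in C equals μ^•(α(s)) times the reachability probability of T from s in C'; similarly for F in place of T. -/

import Mathlib

open scoped ENNReal NNReal BigOperators
open Filter

noncomputable section

variable {S : Type*}

/-- Probability of following a finite path (list of successive states). -/
def pathProb (P : S → S → ℝ≥0∞) : List S → ℝ≥0∞
  | [] => 1
  | [_] => 1
  | a :: b :: l => P a b * pathProb P (b :: l)

/-- `l` is a finite path starting at `s` that visits `T` for the first time
at its last element. -/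
def FirstHitPath (T : Set S) (s : S) (l : List S) : Prop :=
  l.head? = some s ∧ ∃ h : l ≠ [], l.getLast h ∈ T ∧
    ∀ i : Fin l.length, (i : ℕ) + 1 < l.length → l.get i ∉ T

/-- Probability of eventually reaching `T` from `s`. -/
def reachProb (P : S → S → ℝ≥0∞) (T : Set S) (s : S) : ℝ≥0∞ :=
  ∑' l : {l : List S // FirstHitPath T s l}, pathProb P (l : List S)

/-- The avoid set: states from which `T` is unreachable. -/
def Av (P : S → S → ℝ≥0∞) (T : Set S) : Set S := {s | reachProb P T s = 0}

/-- Probability that, starting from `s`, the chain stays outside `R`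
during its first `n` steps (i.e. the hitting time of `R` is `> n`). -/
def surviveProb (P : S → S → ℝ≥0∞) (R : Set S) (s : S) (n : ℕ) : ℝ≥0∞ :=
  ∑' l : {l : List S // l.length = n + 1 ∧ l.head? = some s ∧ ∀ x ∈ l, x ∉ R},
    pathProb P (l : List S)

/-- Expected hitting time of `R` from `s`, via `E τ = ∑_{n≥0} Pr(τ > n)`. -/
def expHittingTime (P : S → S → ℝ≥0∞) (R : Set S) (s : S) : ℝ≥0∞ :=
  ∑' n : ℕ, surviveProb P R s n

/-- Probability that `X_i ∈ A` for all `i ≥ m`, starting from `s`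
(as the infimum over finite horizons). -/
def confineProb (P : S → S → ℝ≥0∞) (A : Set S) (s : S) (m : ℕ) : ℝ≥0∞ :=
  ⨅ n : ℕ, ∑' l : {l : List S // l.length = n + 1 ∧ l.head? = some s ∧
      ∀ i : Fin l.length, m ≤ (i : ℕ) → l.get i ∈ A}, pathProb P (l : List S)

/-- Expected reward collected at the first visit of `T`. -/
def expReward (P : S → S → ℝ≥0∞) (L : List S → ℝ≥0∞) (T : Set S) (s : S) : ℝ≥0∞ :=
  ∑' l : {l : List S // FirstHitPath T s l}, L l * pathProb P (l : List S)

/-- `P` is a stochastic matrix. -/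
def IsStochastic (P : S → S → ℝ≥0∞) : Prop := ∀ s, ∑' s', P s s' = 1

/-- States of the biased chain other than `s₋`. -/
abbrev SA (P : S → S → ℝ≥0∞) (F : Set S) := {s : S // s ∉ Av P F}

/-- `P'` (on `(S ∖ Av(F)) ⊎ {s₋}`, with `none = s₋`) is a biased Markov chain
of `(C, T, F)`. -/
def IsBiased (P : S → S → ℝ≥0∞) (T F : Set S)
    (P' : Option (SA P F) → Option (SA P F) → ℝ≥0∞) : Prop :=
  IsStochastic P' ∧
  P' none none = 1 ∧
  (∀ s : SA P F, s.val ∈ T → P' (some s) (some s) = 1) ∧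
  (∀ s s' : SA P F, 0 < P s.val s'.val → 0 < P' (some s) (some s'))

/-- `(C^•, F^•)` together with `α` is an abstraction of `(C, F)`. -/
def IsAbstraction (P : S → S → ℝ≥0∞) (F : Set S)
    {S' : Type*} (P' : S' → S' → ℝ≥0∞) (F' : Set S')
    (α : SA P F → S') : Prop :=
  (∀ s : SA P F, s.val ∈ F → α s ∈ F') ∧
  (∀ s : SA P F, s.val ∉ F →
    ∑' s' : SA P F, P s.val s'.val * reachProb P' F' (α s')
      ≤ reachProb P' F' (α s))

/-- The decreasing ratio `h(s)` of an abstraction. -/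
def hRatio (P : S → S → ℝ≥0∞) (F : Set S)
    {S' : Type*} (P' : S' → S' → ℝ≥0∞) (F' : Set S')
    (α : SA P F → S') (s : SA P F) : ℝ≥0∞ :=
  (∑' s' : SA P F, P s.val s'.val * reachProb P' F' (α s'))
    / reachProb P' F' (α s)

/-- The biased Markov chain constructed from an abstraction. -/
def biasedKernel (P : S → S → ℝ≥0∞) (F : Set S)
    {S' : Type*} (P' : S' → S' → ℝ≥0∞) (F' : Set S')
    (α : SA P F → S') :
    Option (SA P F) → Option (SA P F) → ℝ≥0∞
  | none, none => 1
  | none, some _ => 0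
  | some s, none => 1 - hRatio P F P' F' α s
  | some s, some s' =>
      P s.val s'.val * reachProb P' F' (α s') / reachProb P' F' (α s)

/-- The random walk `W^p` on `ℕ`: `0` absorbing, up with probability `p`,
down with probability `1 - p`. -/
def walkKernel (p : ℝ≥0∞) : ℕ → ℕ → ℝ≥0∞ := fun m n =>
  if m = 0 then (if n = 0 then 1 else 0)
  else if n = m + 1 then p
  else if n + 1 = m then 1 - p
  else 0

/-- `(C, λ)` is a layered Markov chain. -/
def IsLMC (P : S → S → ℝ≥0∞) (lam : S → ℕ) : Prop :=
  (∀ s s', 0 < P s s' → (lam s : ℤ) ≤ (lam s' : ℤ) + 1) ∧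
  (∀ n : ℕ, {s : S | lam s = n}.Finite)

/-- Total probability of increasing the level. -/
def Pup (P : S → S → ℝ≥0∞) (lam : S → ℕ) (s : S) : ℝ≥0∞ :=
  ∑' s' : {s' : S // lam s < lam s'}, P s s'

/-- Total probability of decreasing the level (by one). -/
def Pdown (P : S → S → ℝ≥0∞) (lam : S → ℕ) (s : S) : ℝ≥0∞ :=
  ∑' s' : {s' : S // lam s' + 1 = lam s}, P s s'

/-- Total probability of keeping the same level. -/
def Peq (P : S → S → ℝ≥0∞) (lam : S → ℕ) (s : S) : ℝ≥0∞ :=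
  ∑' s' : {s' : S // lam s' = lam s}, P s s'

/-- `(C, λ)` is `(p⁺, N₀)`-divergent. -/
def Divergent (P : S → S → ℝ≥0∞) (lam : S → ℕ) (pplus : ℝ≥0∞) (N₀ : ℕ) : Prop :=
  1/2 < pplus ∧ ∀ s : S, N₀ < lam s → Peq P lam s < 1 →
    pplus ≤ Pup P lam s / (Pdown P lam s + Pup P lam s)

end
section PathHelpers

variable {S : Type*}

lemma tsum_eq_of_inj {A B : Type*} (f : A → B) (hf : Function.Injective f)
    (g : B → ℝ≥0∞) (h0 : ∀ b, (∀ a, f a ≠ b) → g b = 0) :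
    ∑' b, g b = ∑' a, g (f a) := by
  refine tsum_eq_tsum_of_ne_zero_bij (fun x => f x.val)
    (fun x y hxy => Subtype.ext (hf hxy)) ?_ (fun x => rfl)
  intro b hb
  have h1 : ¬ ∀ a, f a ≠ b := fun h => hb (h0 b h)
  push_neg at h1
  obtain ⟨a, rfl⟩ := h1
  exact ⟨⟨a, hb⟩, rfl⟩

lemma pathProb_cons (P : S → S → ℝ≥0∞) (a b : S) (l : List S) :
    pathProb P (a :: b :: l) = P a b * pathProb P (b :: l) := rfl

lemma pathProb_map {A : Type*} (P : S → S → ℝ≥0∞) (f : A → S) :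
    ∀ l : List A, pathProb P (l.map f) = pathProb (fun a b => P (f a) (f b)) l
  | [] => rfl
  | [_] => rfl
  | a :: b :: l => by
      have := pathProb_map P f (b :: l)
      simp only [List.map_cons] at this ⊢
      rw [pathProb_cons, pathProb_cons, this]

lemma firstHitPath_singleton {T : Set S} {s : S} (hs : s ∈ T) :
    FirstHitPath T s [s] := by
  refine ⟨rfl, by simp, by simpa using hs, ?_⟩
  intro i hi
  simp at hi

lemma firstHitPath_of_mem {T : Set S} {s : S} (hs : s ∈ T) {l : List S}
    (h : FirstHitPath T s l) : l = [s] := by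
  obtain ⟨h1, hne, hlast, hint⟩ := h
  cases l with
  | nil => simp at h1
  | cons a t =>
    have hA : a = s := by simpa using h1
    cases t with
    | nil => rw [hA]
    | cons b t' =>
      exfalso
      have h0 := hint ⟨0, by simp⟩ (by simp)
      apply h0
      simp only [List.get_eq_getElem, List.getElem_cons_zero]
      rw [hA]
      exact hs

lemma reachProb_of_mem {T : Set S} (P : S → S → ℝ≥0∞) {x : S} (hx : x ∈ T) :
    reachProb P T x = 1 := by
  rw [reachProb,
    tsum_eq_single (⟨[x], firstHitPath_singleton hx⟩ : {l // FirstHitPath T x l})]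
  · rfl
  · intro b hb
    exact absurd (Subtype.ext (firstHitPath_of_mem hx b.2)) hb

lemma firstHitPath_cons {T : Set S} {u v : S} (hu : u ∉ T) {m : List S}
    (h : FirstHitPath T v m) : FirstHitPath T u (u :: m) := by
  obtain ⟨h1, hne, hlast, hint⟩ := h
  refine ⟨rfl, by simp, ?_, ?_⟩
  · rw [List.getLast_cons hne]; exact hlast
  · rintro ⟨i, hilen⟩ hi
    simp only [List.length_cons] at hilen hi
    cases i with
    | zero => simpa using hu
    | succ j =>
      have hj : j < m.length := by omega
      have hget : (u :: m).get ⟨j + 1, hilen⟩ = m.get ⟨j, hj⟩ := rfl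
      rw [hget]
      exact hint ⟨j, hj⟩ (by simpa using hi)

lemma mul_reach_le (P : S → S → ℝ≥0∞) (T : Set S) {u : S} (v : S) (hu : u ∉ T) :
    P u v * reachProb P T v ≤ reachProb P T u := by
  rw [reachProb, reachProb, ← ENNReal.tsum_mul_left]
  have hinj : Function.Injective
      (fun m : {l : List S // FirstHitPath T v l} =>
        (⟨u :: m.val, firstHitPath_cons hu m.prop⟩ : {l : List S // FirstHitPath T u l})) := by
    intro a b hab
    exact Subtype.ext (by simpa using congrArg Subtype.val hab)
  refine le_trans (le_of_eq (tsum_congr fun m => ?_))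
    (ENNReal.tsum_comp_le_tsum_of_injective hinj (fun l => pathProb P l.val))
  obtain ⟨t, ht⟩ : ∃ t, m.val = v :: t :=
    ⟨m.val.tail, List.eq_cons_of_mem_head? (by simp [m.prop.1])⟩
  simp only [ht, pathProb_cons]

lemma reach_pos_of_path (P : S → S → ℝ≥0∞) (F : Set S) :
    ∀ (l : List S) (u : S), l.head? = some u → (∃ x ∈ l, x ∈ F) →
      pathProb P l ≠ 0 → reachProb P F u ≠ 0 := by
  intro l
  induction l with
  | nil => intro u h; simp at h
  | cons a t ih =>
    intro u hh hx hp
    obtain rfl : a = u := by simpa using hh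
    by_cases hu : a ∈ F
    · rw [reachProb_of_mem P hu]; exact one_ne_zero
    · rcases hx with ⟨x, hxl, hxF⟩
      have hxt : x ∈ t := by
        rcases List.mem_cons.1 hxl with rfl | h
        · exact absurd hxF hu
        · exact h
      cases t with
      | nil => simp at hxt
      | cons b t' =>
        rw [pathProb_cons] at hp
        have hPub : P a b ≠ 0 := fun h => hp (by rw [h, zero_mul])
        have hpt : pathProb P (b :: t') ≠ 0 := fun h => hp (by rw [h, mul_zero])
        have hrb : reachProb P F b ≠ 0 := ih b rfl ⟨x, hxt, hxF⟩ hpt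
        intro h0
        have hle := mul_reach_le P F b hu
        rw [h0, le_zero_iff, mul_eq_zero] at hle
        tauto

lemma exists_suffix (P : S → S → ℝ≥0∞) :
    ∀ (l : List S) (hne : l ≠ []) (x : S), x ∈ l → pathProb P l ≠ 0 →
      ∃ (m : List S) (hm : m ≠ []), m.head? = some x ∧
        m.getLast hm = l.getLast hne ∧ pathProb P m ≠ 0 := by
  intro l
  induction l with
  | nil => simp
  | cons a t ih =>
    intro hne x hx hp
    rcases List.mem_cons.1 hx with rfl | hxt
    · exact ⟨x :: t, hne, rfl, rfl, hp⟩
    · have htne : t ≠ [] := by rintro rfl; simp at hxt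
      have hpt : pathProb P t ≠ 0 := by
        cases t with
        | nil => simp at htne
        | cons b t' =>
          rw [pathProb_cons] at hp
          exact fun h => hp (by rw [h, mul_zero])
      obtain ⟨m, hm, h1, h2, h3⟩ := ih htne x hxt hpt
      exact ⟨m, hm, h1, h2.trans (List.getLast_cons htne).symm, h3⟩

lemma pathProb_zero_of_av (P : S → S → ℝ≥0∞) (F T : Set S) (hTF : T ⊆ F) {s : S}
    {l : List S} (hl : FirstHitPath T s l) {x : S} (hx : x ∈ l) (hav : x ∈ Av P F) :
    pathProb P l = 0 := by
  by_contra hp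
  obtain ⟨h1, hne, hlast, hint⟩ := hl
  obtain ⟨m, hm, mh, mlast, mp⟩ := exists_suffix P l hne x hx hp
  have hmem : ∃ y ∈ m, y ∈ F :=
    ⟨m.getLast hm, List.getLast_mem hm, by rw [mlast]; exact hTF hlast⟩
  exact reach_pos_of_path P F m x mh hmem mp hav

lemma firstHitPath_map {A B : Type*} (f : A → B) (hf : Function.Injective f)
    (U : Set B) (a : A) (l : List A) :
    FirstHitPath U (f a) (l.map f) ↔ FirstHitPath (f ⁻¹' U) a l := by
  cases l with
  | nil =>
    constructor <;> (intro h; exact absurd h.1 (by simp))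
  | cons b t =>
    constructor
    · rintro ⟨h1, hne, hlast, hint⟩
      obtain rfl : b = a := hf (by simpa using h1)
      refine ⟨rfl, by simp, ?_, ?_⟩
      · rw [List.getLast_map] at hlast
        exact hlast
      · intro i hi
        have hi2 : (i : ℕ) < ((b :: t).map f).length := by simpa using i.isLt
        have h := hint ⟨i, hi2⟩ (by simpa using hi)
        simp only [List.get_eq_getElem, List.getElem_map] at h
        simp only [List.get_eq_getElem]
        exact h
    · rintro ⟨h1, hne, hlast, hint⟩
      obtain rfl : b = a := by simpa using h1
      refine ⟨by simp, by simp, ?_, ?_⟩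
      · rw [List.getLast_map]
        exact hlast
      · intro i hi
        have hi' : (i : ℕ) < (b :: t).length := by simpa using i.isLt
        have h := hint ⟨i, hi'⟩ (by simpa using hi)
        simp only [List.get_eq_getElem] at h
        simp only [List.get_eq_getElem, List.getElem_map]
        exact h

lemma firstHitPath_tail {T : Set S} {x : S} (hx : x ∉ T) {l : List S}
    (h : FirstHitPath T x l) :
    ∃ (ht : l.tail ≠ []), l = x :: l.tail ∧
      FirstHitPath T (l.tail.head ht) l.tail := by
  obtain ⟨h1, hne, hlast, hint⟩ := h
  cases l with
  | nil => simp at h1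
  | cons a t =>
    obtain rfl : a = x := by simpa using h1
    have htne : t ≠ [] := by
      rintro rfl
      exact hx (by simpa using hlast)
    refine ⟨htne, rfl, List.head?_eq_head htne, htne, ?_, ?_⟩
    · show t.getLast htne ∈ T
      rw [← List.getLast_cons (a := a) htne]
      exact hlast
    · rintro ⟨i, hilen⟩ hi
      simp only [List.tail_cons] at hilen hi ⊢
      have hi2 : i + 1 < (a :: t).length := by simp only [List.length_cons]; omega
      have h := hint ⟨i + 1, hi2⟩ (by simp only [List.length_cons]; omega)
      simp only [List.get_eq_getElem] at h ⊢
      simpa using h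

lemma pathProb_cons_ne (P : S → S → ℝ≥0∞) (x : S) {t : List S} (ht : t ≠ []) :
    pathProb P (x :: t) = P x (t.head ht) * pathProb P t := by
  cases t with
  | nil => exact absurd rfl ht
  | cons b u => rfl

lemma reachProb_le_one {S' : Type*} (P' : S' → S' → ℝ≥0∞) (hP' : IsStochastic P')
    (F' : Set S') (x : S') : reachProb P' F' x ≤ 1 := by
  have hB : ∀ n x,
      (∑' l : {l : List S' // FirstHitPath F' x l ∧ l.length ≤ n},
        pathProb P' l.val) ≤ 1 := by
    intro n
    induction n with
    | zero =>
      intro x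
      haveI : IsEmpty {l : List S' // FirstHitPath F' x l ∧ l.length ≤ 0} := by
        refine ⟨fun l => ?_⟩
        obtain ⟨hne, -⟩ := l.prop.1.2
        exact hne (List.length_eq_zero_iff.1 (Nat.le_zero.1 l.prop.2))
      rw [tsum_empty]
      exact zero_le_one
    | succ n ihn =>
      intro x
      by_cases hx : x ∈ F'
      · rcases isEmpty_or_nonempty
          {l : List S' // FirstHitPath F' x l ∧ l.length ≤ n + 1} with he | ⟨⟨a⟩⟩
        · rw [tsum_empty]; exact zero_le_one
        · rw [tsum_eq_single a (fun b hb => absurd (Subtype.ext (by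
            rw [firstHitPath_of_mem hx b.prop.1, firstHitPath_of_mem hx a.prop.1])) hb)]
          rw [firstHitPath_of_mem hx a.prop.1]
          exact le_refl 1
      · set Sub1 := {l : List S' // FirstHitPath F' x l ∧ l.length ≤ n + 1} with hSub1
        set SubM := fun y => {m : List S' // FirstHitPath F' y m ∧ m.length ≤ n} with hSubM
        have hdec : ∀ l : Sub1, ∃ ht : l.val.tail ≠ [],
            l.val = x :: l.val.tail ∧
            FirstHitPath F' (l.val.tail.head ht) l.val.tail :=
          fun l => firstHitPath_tail hx l.prop.1
        have hlen : ∀ l : Sub1, l.val.tail.length ≤ n := by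
          intro l
          have := congrArg List.length (hdec l).choose_spec.1
          simp only [List.length_cons] at this
          omega
        set Φ : Sub1 → Σ y : S', SubM y := fun l =>
          ⟨l.val.tail.head (hdec l).choose,
            ⟨l.val.tail, (hdec l).choose_spec.2, hlen l⟩⟩ with hΦ
        have hΦinj : Function.Injective Φ := by
          intro l₁ l₂ h
          have ht := congrArg (fun p : Σ y : S', SubM y => p.2.val) h
          change l₁.val.tail = l₂.val.tail at ht
          refine Subtype.ext ?_
          rw [(hdec l₁).choose_spec.1, (hdec l₂).choose_spec.1, ht]
        calc (∑' l : Sub1, pathProb P' l.val)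
            = ∑' l : Sub1,
                (fun p : Σ y : S', SubM y => P' x p.1 * pathProb P' p.2.val) (Φ l) := by
              refine tsum_congr fun l => ?_
              conv_lhs => rw [(hdec l).choose_spec.1]
              rw [pathProb_cons_ne P' x (hdec l).choose]
          _ ≤ ∑' p : Σ y : S', SubM y, P' x p.1 * pathProb P' p.2.val :=
              ENNReal.tsum_comp_le_tsum_of_injective hΦinj _
          _ = ∑' y : S', ∑' m : SubM y, P' x y * pathProb P' m.val :=
              ENNReal.tsum_sigma' _
          _ = ∑' y : S', P' x y * ∑' m : SubM y, pathProb P' m.val :=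
              tsum_congr fun y => ENNReal.tsum_mul_left
          _ ≤ ∑' y : S', P' x y * 1 :=
              ENNReal.tsum_le_tsum fun y =>
                mul_le_mul_right (ihn y) _
          _ = 1 := by simpa using hP' x
  rw [reachProb]
  refine Summable.tsum_le_of_sum_le ENNReal.summable fun s => ?_
  set n := s.sup fun a => a.val.length with hn
  have hj : ∀ a : {a // a ∈ s}, a.val.val.length ≤ n :=
    fun a => Finset.le_sup (f := fun b : {l : List S' // FirstHitPath F' x l} => b.val.length) a.prop
  set j : {a // a ∈ s} → {l : List S' // FirstHitPath F' x l ∧ l.length ≤ n} :=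
    fun a => ⟨a.val.val, a.val.prop, hj a⟩ with hjdef
  have hjinj : Function.Injective j := by
    intro a b h
    exact Subtype.ext (Subtype.ext (by simpa [hjdef] using congrArg Subtype.val h))
  calc (∑ a ∈ s, pathProb P' a.val)
      = ∑' a : {a // a ∈ s}, pathProb P' a.val.val :=
        (Finset.tsum_subtype s fun a => pathProb P' a.val).symm
    _ = ∑' a : {a // a ∈ s}, pathProb P' (j a).val := rfl
    _ ≤ ∑' l : {l : List S' // FirstHitPath F' x l ∧ l.length ≤ n}, pathProb P' l.val :=
        ENNReal.tsum_comp_le_tsum_of_injective hjinj _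
    _ ≤ 1 := hB n x

end PathHelpers

section KeyLemma

variable {S : Type*}

lemma key_reach (P : S → S → ℝ≥0∞) (F : Set S) {S' : Type*}
    (P' : S' → S' → ℝ≥0∞) (hP' : IsStochastic P') (F' : Set S')
    (α : SA P F → S') (habs : IsAbstraction P F P' F' α)
    (T : Set S) (hTF : T ⊆ F) (s : SA P F) :
    reachProb P T s.val =
      reachProb P' F' (α s) *
        reachProb (biasedKernel P F P' F' α)
          {x : Option (SA P F) | ∃ u : SA P F, x = some u ∧ u.val ∈ T}
          (some s) := by
  classical
  set g : SA P F → ℝ≥0∞ := fun u => reachProb P' F' (α u) with hg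
  set Q := biasedKernel P F P' F' α with hQ
  set PA : SA P F → SA P F → ℝ≥0∞ := fun a b => P a.val b.val with hPA
  set T' : Set (Option (SA P F)) :=
    {x | ∃ u : SA P F, x = some u ∧ u.val ∈ T} with hT'
  have hvalinj : Function.Injective (Subtype.val : SA P F → S) :=
    Subtype.val_injective
  have hsomeinj : Function.Injective (some : SA P F → Option (SA P F)) :=
    Option.some_injective _
  have hpreT : (some ⁻¹' T' : Set (SA P F)) = Subtype.val ⁻¹' T := by
    ext u
    simp only [Set.mem_preimage, hT', Set.mem_setOf_eq]
    constructor
    · rintro ⟨w, hw, hwT⟩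
      obtain rfl := Option.some_inj.1 hw
      exact hwT
    · intro h
      exact ⟨u, rfl, h⟩
  have hgF : ∀ u : SA P F, u.val ∈ F → g u = 1 := fun u hu =>
    reachProb_of_mem P' (habs.1 u hu)
  have hgle : ∀ u : SA P F, g u ≤ 1 := fun u => reachProb_le_one P' hP' F' (α u)
  have hQss : ∀ a b : SA P F, Q (some a) (some b) = PA a b * g b / g a :=
    fun a b => rfl
  -- positivity of g along paths with positive probability
  have hpos : ∀ l : List (SA P F), ∀ hne : l ≠ [], 0 < g (l.getLast hne) →
      pathProb PA l ≠ 0 → ∀ u ∈ l, 0 < g u := by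
    intro l
    induction l with
    | nil => intro hne; exact absurd rfl hne
    | cons a t ih =>
      intro hne hlast hp u hu
      cases t with
      | nil =>
        rcases List.mem_singleton.1 hu with rfl
        simpa using hlast
      | cons b t' =>
        rw [pathProb_cons] at hp
        have hPab : PA a b ≠ 0 := fun h => hp (by rw [h, zero_mul])
        have hpt : pathProb PA (b :: t') ≠ 0 := fun h => hp (by rw [h, mul_zero])
        rw [List.getLast_cons (by simp : (b :: t') ≠ [])] at hlast
        have ht := ih (by simp) hlast hpt
        rcases List.mem_cons.1 hu with rfl | hut
        · by_cases haF : u.val ∈ F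
          · rw [hgF u haF]; exact zero_lt_one
          · have h1 : ∑' s' : SA P F, P u.val s'.val * g s' ≤ g u := habs.2 u haF
            have h2 : P u.val b.val * g b ≤ ∑' s' : SA P F, P u.val s'.val * g s' :=
              ENNReal.le_tsum b
            have h3 : 0 < P u.val b.val * g b :=
              ENNReal.mul_pos hPab (ht b (by simp)).ne'
            exact lt_of_lt_of_le h3 (h2.trans h1)
        · exact ht u hut
  -- telescoping identity
  have htel : ∀ l : List (SA P F), (∀ u ∈ l, g u ≠ 0) → (∀ u ∈ l, g u ≠ ∞) →
      ∀ hne : l ≠ [],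
      pathProb Q (l.map some) * g (l.head hne) =
        pathProb PA l * g (l.getLast hne) := by
    intro l
    induction l with
    | nil => intro _ _ hne; exact absurd rfl hne
    | cons a t ih =>
      intro h0 hfin hne
      cases t with
      | nil => simp [pathProb]
      | cons b t' =>
        have h0' : ∀ u ∈ b :: t', g u ≠ 0 :=
          fun u hu => h0 u (List.mem_cons_of_mem a hu)
        have hfin' : ∀ u ∈ b :: t', g u ≠ ∞ :=
          fun u hu => hfin u (List.mem_cons_of_mem a hu)
        have IH : pathProb Q (List.map some (b :: t')) * g b =
            pathProb PA (b :: t') * g ((b :: t').getLast (by simp)) :=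
          ih h0' hfin' (by simp)
        have hga0 : g a ≠ 0 := h0 a (by simp)
        have hgat : g a ≠ ∞ := hfin a (by simp)
        calc pathProb Q (List.map some (a :: b :: t')) * g ((a :: b :: t').head hne)
            = (PA a b * g b / g a) * pathProb Q (List.map some (b :: t')) * g a := by
              simp only [List.map_cons, List.head_cons]
              rw [pathProb_cons, ← List.map_cons, hQss a b]
          _ = (PA a b * g b) * pathProb Q (List.map some (b :: t')) := by
              rw [mul_right_comm, ENNReal.div_mul_cancel hga0 hgat]
          _ = PA a b * (pathProb Q (List.map some (b :: t')) * g b) := by ring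
          _ = PA a b * (pathProb PA (b :: t') * g ((b :: t').getLast (by simp))) := by
              rw [IH]
          _ = pathProb PA (a :: b :: t') * g ((a :: b :: t').getLast hne) := by
              rw [pathProb_cons, List.getLast_cons (by simp : (b :: t') ≠ []), mul_assoc]
  -- zero propagation
  have hz : ∀ l : List (SA P F), pathProb PA l = 0 →
      pathProb Q (l.map some) = 0 := by
    intro l
    induction l with
    | nil => intro h; rw [show pathProb PA [] = 1 from rfl] at h; exact absurd h one_ne_zero
    | cons a t ih =>
      intro h
      cases t with
      | nil => rw [show pathProb PA [a] = 1 from rfl] at h; exact absurd h one_ne_zero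
      | cons b t' =>
        rw [pathProb_cons] at h
        simp only [List.map_cons]
        rw [pathProb_cons]
        rcases mul_eq_zero.1 h with h1 | h2
        · rw [← List.map_cons, hQss a b, h1, zero_mul, ENNReal.zero_div, zero_mul]
        · have hih := ih h2
          simp only [List.map_cons] at hih
          rw [hih, mul_zero]
  -- paths through `none` have probability zero
  have hnone : ∀ L : List (Option (SA P F)), ∀ hne : L ≠ [],
      L.getLast hne ≠ none → none ∈ L → pathProb Q L = 0 := by
    intro L
    induction L with
    | nil => intro hne; exact absurd rfl hne
    | cons a t ih =>
      intro hne hlast hmem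
      cases t with
      | nil =>
        obtain rfl := (List.mem_singleton.1 hmem).symm
        exact absurd rfl hlast
      | cons b t' =>
        rw [pathProb_cons]
        by_cases hm : none ∈ b :: t'
        · rw [List.getLast_cons (by simp : (b :: t') ≠ [])] at hlast
          rw [ih (by simp) hlast hm, mul_zero]
        · have ha : a = none := by
            rcases List.mem_cons.1 hmem with h | h
            · exact h.symm
            · exact absurd h hm
          subst ha
          cases b with
          | none => exact absurd List.mem_cons_self hm
          | some u =>
            rw [show Q none (some u) = 0 from rfl, zero_mul]
  -- per-path identity
  have hperpath : ∀ l : List (SA P F), FirstHitPath (Subtype.val ⁻¹' T) s l →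
      pathProb PA l = g s * pathProb Q (l.map some) := by
    intro l hl
    by_cases hp : pathProb PA l = 0
    · rw [hp, hz l hp, mul_zero]
    · obtain ⟨h1, hne, hlastT, hint⟩ := hl
      have hglast : g (l.getLast hne) = 1 := hgF _ (hTF hlastT)
      have h0 : ∀ u ∈ l, g u ≠ 0 :=
        fun u hu => (hpos l hne (by rw [hglast]; exact zero_lt_one) hp u hu).ne'
      have hfin : ∀ u ∈ l, g u ≠ ∞ :=
        fun u _ => (lt_of_le_of_lt (hgle u) (by norm_num)).ne
      have htl := htel l h0 hfin hne
      rw [hglast, mul_one] at htl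
      have hhead : l.head hne = s := by
        have hh := List.head?_eq_head (l := l) hne
        rw [h1] at hh
        exact (Option.some_inj.1 hh).symm
      rw [hhead] at htl
      rw [← htl, mul_comm]
  -- step 1: sum over lifted paths
  have hstep1 : reachProb P T s.val =
      ∑' l : {l : List (SA P F) // FirstHitPath (Subtype.val ⁻¹' T) s l},
        pathProb PA l.val := by
    rw [reachProb]
    have e := tsum_eq_of_inj
      (fun l : {l : List (SA P F) // FirstHitPath (Subtype.val ⁻¹' T) s l} =>
        (⟨l.val.map Subtype.val,
          (firstHitPath_map Subtype.val hvalinj T s l.val).2 l.prop⟩ :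
          {l : List S // FirstHitPath T s.val l}))
      (fun l₁ l₂ h => Subtype.ext (List.map_injective_iff.2 hvalinj
        (by simpa using congrArg Subtype.val h)))
      (fun m => pathProb P m.val) ?_
    · rw [e]
      refine tsum_congr fun l => ?_
      rw [show pathProb P (l.val.map Subtype.val) = pathProb PA l.val from
        (pathProb_map P Subtype.val l.val).trans (by rw [hPA])]
    · intro m hm
      by_cases hav : ∃ x ∈ m.val, x ∈ Av P F
      · obtain ⟨x, hx, hxav⟩ := hav
        exact pathProb_zero_of_av P F T hTF m.prop hx hxav
      · push_neg at hav
        exfalso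
        set l₀ : List (SA P F) :=
          m.val.attach.map (fun x => (⟨x.val, hav x.val x.prop⟩ : SA P F)) with hl₀
        have hmap : l₀.map Subtype.val = m.val := by
          simp [hl₀, List.map_map, Function.comp_def]
        have hfh : FirstHitPath (Subtype.val ⁻¹' T) s l₀ :=
          (firstHitPath_map Subtype.val hvalinj T s l₀).1
            (by rw [hmap]; exact m.prop)
        exact hm ⟨l₀, hfh⟩ (Subtype.ext hmap)
  -- step 2: sum over lifted paths for the biased chain
  have hstep2 : reachProb Q T' (some s) =
      ∑' l : {l : List (SA P F) // FirstHitPath (Subtype.val ⁻¹' T) s l},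
        pathProb Q (l.val.map some) := by
    rw [reachProb]
    have e := tsum_eq_of_inj
      (fun l : {l : List (SA P F) // FirstHitPath (Subtype.val ⁻¹' T) s l} =>
        (⟨l.val.map some,
          (firstHitPath_map some hsomeinj T' s l.val).2
            (by rw [hpreT]; exact l.prop)⟩ :
          {L : List (Option (SA P F)) // FirstHitPath T' (some s) L}))
      (fun l₁ l₂ h => Subtype.ext (List.map_injective_iff.2 hsomeinj
        (by simpa using congrArg Subtype.val h)))
      (fun L => pathProb Q L.val) ?_
    · rw [e]
    · intro L hm
      by_cases hn : none ∈ L.val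
      · obtain ⟨h1, hne, hlastT', hint⟩ := L.prop
        obtain ⟨u, hu, huT⟩ := hlastT'
        exact hnone L.val hne (by rw [hu]; simp) hn
      · exfalso
        have hxn : ∀ x ∈ L.val, (x : Option (SA P F)).isSome := by
          intro x hx
          rcases x with _ | u
          · exact absurd hx hn
          · rfl
        set l₀ : List (SA P F) :=
          L.val.attach.map (fun x => (x.val).get (hxn x.val x.prop)) with hl₀
        have hmap : l₀.map some = L.val := by
          simp [hl₀, List.map_map, Function.comp_def]
        have hfh : FirstHitPath (Subtype.val ⁻¹' T) s l₀ := by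
          rw [← hpreT]
          exact (firstHitPath_map some hsomeinj T' s l₀).1
            (by rw [hmap]; exact L.prop)
        exact hm ⟨l₀, hfh⟩ (Subtype.ext hmap)
  calc reachProb P T s.val
      = ∑' l : {l : List (SA P F) // FirstHitPath (Subtype.val ⁻¹' T) s l},
          pathProb PA l.val := hstep1
    _ = ∑' l : {l : List (SA P F) // FirstHitPath (Subtype.val ⁻¹' T) s l},
          g s * pathProb Q (l.val.map some) :=
        tsum_congr fun l => hperpath l.val l.prop
    _ = g s * ∑' l : {l : List (SA P F) // FirstHitPath (Subtype.val ⁻¹' T) s l},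
          pathProb Q (l.val.map some) := ENNReal.tsum_mul_left
    _ = g s * reachProb Q T' (some s) := by rw [hstep2]
    _ = reachProb P' F' (α s) *
          reachProb (biasedKernel P F P' F' α)
            {x : Option (SA P F) | ∃ u : SA P F, x = some u ∧ u.val ∈ T}
            (some s) := by
        simp only [hg, hQ, hT']

end KeyLemma


open scoped Classical

section Thms

variable {S : Type*}

theorem stmt10 [Countable S] (P : S → S → ℝ≥0∞) (hP : IsStochastic P)
    (F : Set S) {S' : Type*} [Countable S']
    (P' : S' → S' → ℝ≥0∞) (hP' : IsStochastic P') (F' : Set S')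
    (α : SA P F → S') (habs : IsAbstraction P F P' F' α)
    (T : Set S) (hTF : T ⊆ F) (habsT : ∀ s ∈ T, P s s = 1) :
    ∀ s : SA P F,
      reachProb P T s.val =
        reachProb P' F' (α s) *
          reachProb (biasedKernel P F P' F' α)
            {x : Option (SA P F) | ∃ u : SA P F, x = some u ∧ u.val ∈ T}
            (some s) ∧
      reachProb P F s.val =
        reachProb P' F' (α s) *
          reachProb (biasedKernel P F P' F' α)
            {x : Option (SA P F) | ∃ u : SA P F, x = some u ∧ u.val ∈ F}
            (some s) := by
  intro s
  exact ⟨key_reach P F P' hP' F' α habs T hTF s,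
    key_reach P F P' hP' F' α habs F (subset_rfl) s⟩

end Thms
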